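/- (Williamson's theorem) Let f be a positive-definite quadratic form on a 2n-dimensional real symplectic vector space (V, ω). Then there exists a symplectic basis {x_1,…,x_n, y_1,…,y_n} of V and positive reals μ_1,…,μ_n such that for every v = Σ_j (s_j x_j + t_j y_j) one has f(v) = Σ_j μ_j (s_j² + t_j²). -/

import Mathlib

open Module LinearMap RealInnerProductSpace

universe u

theorem williamson_aux (n : ℕ) : ∀ {V : Type u} [AddCommGroup V] [Module ℝ V]
    [FiniteDimensional ℝ V], Module.finrank ℝ V = 2 * n →
    ∀ (ω : LinearMap.BilinForm ℝ V), (∀ v w : V, ω v w = - ω w v) →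
    (∀ v : V, (∀ w : V, ω v w = 0) → v = 0) →
    ∀ (f : QuadraticForm ℝ V), f.PosDef →
    ∃ (b : Basis (Fin n ⊕ Fin n) ℝ V) (mu : Fin n → ℝ),
      (∀ j, 0 < mu j) ∧
      (∀ i j, ω (b (Sum.inl i)) (b (Sum.inr j)) = if i = j then 1 else 0) ∧
      (∀ i j, ω (b (Sum.inl i)) (b (Sum.inl j)) = 0) ∧
      (∀ i j, ω (b (Sum.inr i)) (b (Sum.inr j)) = 0) ∧
      ∀ s t : Fin n → ℝ,
        f (∑ j, (s j • b (Sum.inl j) + t j • b (Sum.inr j)))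
          = ∑ j, mu j * ((s j) ^ 2 + (t j) ^ 2) := by
  induction n with
  | zero =>
    intro V _ _ _ hdim ω hanti hnondeg f hf
    have h0 : Module.finrank ℝ V = 0 := by omega
    haveI : Subsingleton V := Module.finrank_zero_iff.mp h0
    exact ⟨Basis.empty _, Fin.elim0, fun j => j.elim0, fun i => i.elim0, fun i => i.elim0,
      fun i => i.elim0, fun s t => by simp [Subsingleton.elim _ (0 : V)]⟩
  | succ k ih =>
    intro V _ _ _ hdim ω hanti hnondeg f hf
    have hωself : ∀ v : V, ω v v = 0 := fun v => by
      have := hanti v v; linarith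
    -- associated bilinear form, inner product structure
    set B : LinearMap.BilinForm ℝ V := QuadraticMap.associated (R := ℝ) f with hB
    have hBsymm : ∀ v w, B v w = B w v := fun v w =>
      QuadraticMap.associated_isSymm ℝ f v w
    have hBf : ∀ v, B v v = f v := fun v => QuadraticMap.associated_eq_self_apply ℝ f v
    letI core : InnerProductSpace.Core ℝ V :=
    { inner := fun v w => B v w
      conj_inner_symm := fun v w => by simpa using hBsymm w v
      re_inner_nonneg := fun v => by
        rcases eq_or_ne v 0 with rfl | hv
        · simp
        · simpa [hBf] using (hf v hv).le
      add_left := fun v w z => by simp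
      smul_left := fun v w r => by simp
      definite := fun v hv => by
        by_contra h
        exact absurd (by simpa [hBf] using hv) (ne_of_gt (hf v h)) }
    letI : NormedAddCommGroup V := core.toNormedAddCommGroup
    letI : InnerProductSpace ℝ V := InnerProductSpace.ofCore core.toCore
    have hinner : ∀ v w : V, ⟪v, w⟫ = B v w := fun v w => rfl
    have hfinner : ∀ v : V, f v = ⟪v, v⟫ := fun v => (hBf v).symm
    haveI : CompleteSpace V := FiniteDimensional.complete ℝ V
    -- the skew operator J
    let J : V →ₗ[ℝ] V :=
    { toFun := fun v => (InnerProductSpace.toDual ℝ V).symm ((ω v).toContinuousLinearMap)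
      map_add' := fun v w => by simp [map_add]
      map_smul' := fun r v => by simp [map_smul] }
    have hJ : ∀ v w : V, ⟪J v, w⟫ = ω v w := fun v w =>
      InnerProductSpace.toDual_symm_apply
    have hJskew : ∀ v w : V, ⟪J v, w⟫ = -⟪v, J w⟫ := fun v w => by
      rw [hJ, hanti, real_inner_comm, hJ]
    have hJinj : ∀ v : V, J v = 0 → v = 0 := fun v hv =>
      hnondeg v fun w => by rw [← hJ, hv, inner_zero_left]
    -- the symmetric positive operator T = -J²
    let T : V →ₗ[ℝ] V := -(J ∘ₗ J)
    have hTsym : T.IsSymmetric := fun v w => by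
      show ⟪-(J (J v)), w⟫ = ⟪v, -(J (J w))⟫
      rw [inner_neg_left, inner_neg_right, hJskew (J v) w, neg_neg]
      exact hJskew v (J w)
    -- eigenvector
    let e : V := hTsym.eigenvectorBasis hdim ⟨0, by omega⟩
    set μ : ℝ := hTsym.eigenvalues hdim ⟨0, by omega⟩ with hμdef
    have hTe : T e = μ • e := by
      exact_mod_cast hTsym.apply_eigenvectorBasis hdim ⟨0, by omega⟩
    have hee : ⟪e, e⟫ = 1 := by
      have h1 : ‖e‖ = 1 := (hTsym.eigenvectorBasis hdim).orthonormal.1 _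
      rw [real_inner_self_eq_norm_sq, h1]; norm_num
    have he0 : e ≠ 0 := fun h => by rw [h] at hee; simp at hee
    have hJJe : J (J e) = -(μ • e) := by
      have h : -(J (J e)) = μ • e := hTe
      rw [neg_eq_iff_eq_neg] at h
      exact h
    have hJee : ⟪J e, e⟫ = 0 := by
      rw [hJ, hωself]
    have heJe : ⟪e, J e⟫ = 0 := by rw [real_inner_comm]; exact hJee
    have hJeJe : ⟪J e, J e⟫ = μ := by
      have h1 : ⟪J (J e), e⟫ = -⟪J e, J e⟫ := hJskew (J e) e
      have h2 : ⟪J (J e), e⟫ = -μ := by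
        rw [hJJe, inner_neg_left, real_inner_smul_left, hee, mul_one]
      linarith
    have hJe0 : J e ≠ 0 := fun h => he0 (hJinj e h)
    have hμpos : 0 < μ := by
      rw [← hJeJe, real_inner_self_eq_norm_sq]
      exact pow_pos (norm_pos_iff.mpr hJe0) 2
    -- constants
    set r : ℝ := Real.sqrt μ with hr
    have hrpos : 0 < r := Real.sqrt_pos.mpr hμpos
    have hrne : r ≠ 0 := ne_of_gt hrpos
    have hr2 : r ^ 2 = μ := Real.sq_sqrt hμpos.le
    set c : ℝ := (Real.sqrt r)⁻¹ with hc
    have hcpos : 0 < c := inv_pos.mpr (Real.sqrt_pos.mpr hrpos)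
    have hc2 : c ^ 2 = 1 / r := by
      rw [hc, inv_pow, Real.sq_sqrt hrpos.le, one_div]
    -- the distinguished pair
    set x : V := c • e with hx
    set y : V := (c / r) • J e with hy
    have hJx : J x = c • J e := by rw [hx, map_smul]
    have hJy : J y = -((c / r * μ) • e) := by
      rw [hy, map_smul, hJJe, smul_neg, smul_smul]
    have hxx : ⟪x, x⟫ = 1 / r := by
      rw [hx, real_inner_smul_left, real_inner_smul_right, hee, mul_one, ← pow_two, hc2]
    have hxy : ⟪x, y⟫ = 0 := by
      rw [hx, hy, real_inner_smul_left, real_inner_smul_right, heJe, mul_zero, mul_zero]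
    have hyy : ⟪y, y⟫ = 1 / r := by
      rw [hy, real_inner_smul_left, real_inner_smul_right, hJeJe]
      have h : c / r * (c / r * μ) = c ^ 2 * μ / r ^ 2 := by ring
      rw [h, hc2, hr2]
      field_simp
    have hωxy : ω x y = 1 := by
      rw [← hJ, hJx, hy, real_inner_smul_left, real_inner_smul_right, hJeJe]
      have h : c * (c / r * μ) = c ^ 2 * (μ / r) := by ring
      rw [h, hc2, ← hr2]
      field_simp
    -- the subspaces
    set U : Submodule ℝ V := Submodule.span ℝ {e, J e} with hU
    have heU : e ∈ U := Submodule.subset_span (by simp)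
    have hJeU : J e ∈ U := Submodule.subset_span (by simp)
    have hxU : x ∈ U := U.smul_mem _ heU
    have hyU : y ∈ U := U.smul_mem _ hJeU
    set W : Submodule ℝ V := Uᗮ with hW
    have hliU : LinearIndependent ℝ ![e, J e] := by
      rw [LinearIndependent.pair_iff]
      intro s t hst
      have h1 : ⟪s • e + t • J e, e⟫ = 0 := by rw [hst, inner_zero_left]
      have h2 : ⟪s • e + t • J e, J e⟫ = 0 := by rw [hst, inner_zero_left]
      rw [inner_add_left, real_inner_smul_left, real_inner_smul_left, hee, hJee,
        mul_one, mul_zero, add_zero] at h1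
      rw [inner_add_left, real_inner_smul_left, real_inner_smul_left, heJe, hJeJe,
        mul_zero, zero_add] at h2
      exact ⟨h1, by
        have := h2
        rcases mul_eq_zero.mp this with h | h
        · exact h
        · exact absurd h (ne_of_gt hμpos)⟩
    have hUrank : finrank ℝ U = 2 := by
      have hrange : Set.range ![e, J e] = {e, J e} := by
        simp [Matrix.range_cons, Matrix.range_empty]
        exact Set.pair_comm _ _
      rw [hU, ← hrange, finrank_span_eq_card hliU]
      simp
    have hWrank : finrank ℝ W = 2 * k := by
      have h := Submodule.finrank_add_finrank_orthogonal U
      rw [hUrank, hdim, ← hW] at h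
      omega
    -- orthogonality facts
    have hperpU : ∀ w : V, w ∈ W → ∀ u : V, u ∈ U → ⟪u, w⟫ = 0 := fun w hw u hu =>
      (Submodule.mem_orthogonal U w).mp hw u hu
    have hωxw : ∀ w : V, w ∈ W → ω x w = 0 := fun w hw => by
      rw [← hJ, hJx, real_inner_smul_left, hperpU w hw (J e) hJeU, mul_zero]
    have hωyw : ∀ w : V, w ∈ W → ω y w = 0 := fun w hw => by
      rw [← hJ, hJy, inner_neg_left, real_inner_smul_left, hperpU w hw e heU,
        mul_zero, neg_zero]
    have hωwx : ∀ w : V, w ∈ W → ω w x = 0 := fun w hw => by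
      rw [hanti, hωxw w hw, neg_zero]
    have hωwy : ∀ w : V, w ∈ W → ω w y = 0 := fun w hw => by
      rw [hanti, hωyw w hw, neg_zero]
    have hωwe : ∀ w : V, w ∈ W → ω w e = 0 := fun w hw => by
      rw [hanti, ← hJ, hperpU w hw (J e) hJeU, neg_zero]
    have hωwJe : ∀ w : V, w ∈ W → ω w (J e) = 0 := fun w hw => by
      rw [hanti, ← hJ, hJJe, inner_neg_left, real_inner_smul_left,
        hperpU w hw e heU, mul_zero, neg_zero, neg_zero]
    -- restricted forms
    set ωW : LinearMap.BilinForm ℝ W := ω.compl₁₂ W.subtype W.subtype with hωWdef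
    have hωWapply : ∀ v w : W, ωW v w = ω (v : V) (w : V) := fun v w => rfl
    set fW : QuadraticForm ℝ W := f.comp W.subtype with hfWdef
    have hfWapply : ∀ v : W, fW v = f (v : V) := fun v => rfl
    have hfWpos : fW.PosDef := fun v hv => by
      rw [hfWapply]
      exact hf _ fun h => hv (Subtype.ext h)
    have hωWanti : ∀ v w : W, ωW v w = -ωW w v := fun v w => hanti _ _
    have hωWnondeg : ∀ v : W, (∀ w : W, ωW v w = 0) → v = 0 := by
      intro v hv
      have hv0 : ∀ u : V, ω (v : V) u = 0 := by
        intro u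
        obtain ⟨p, hp, q, hq, rfl⟩ := U.exists_add_mem_mem_orthogonal u
        have h1 : ω (v : V) p = 0 := by
          induction hp using Submodule.span_induction with
          | mem z hz =>
            rcases hz with rfl | hz
            · exact hωwe _ v.2
            · rw [Set.mem_singleton_iff] at hz
              subst hz
              exact hωwJe _ v.2
          | zero => simp
          | add a b ha hb h1 h2 => rw [map_add, h1, h2, add_zero]
          | smul a z hz h1 => rw [map_smul, h1, smul_zero]
        have h2 : ω (v : V) q = 0 := hv ⟨q, hq⟩
        rw [map_add, h1, h2, add_zero]
      exact Subtype.ext (hnondeg _ hv0)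
    -- induction hypothesis
    obtain ⟨b', mu', hmu'pos, hb'1, hb'2, hb'3, hb'f⟩ :=
      ih (V := W) hWrank ωW hωWanti hωWnondeg fW hfWpos
    -- assemble the family
    set X : Fin (k + 1) → V := Fin.cases x (fun j => (b' (Sum.inl j) : V)) with hX
    set Y : Fin (k + 1) → V := Fin.cases y (fun j => (b' (Sum.inr j) : V)) with hY
    have hX0 : X 0 = x := rfl
    have hY0 : Y 0 = y := rfl
    have hXs : ∀ j : Fin k, X j.succ = (b' (Sum.inl j) : V) := fun j => by
      simp [hX]
    have hYs : ∀ j : Fin k, Y j.succ = (b' (Sum.inr j) : V) := fun j => by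
      simp [hY]
    have hbW : ∀ i, ((b' i : V)) ∈ W := fun i => (b' i).2
    have hXY : ∀ i j, ω (X i) (Y j) = if i = j then 1 else 0 := by
      intro i j
      induction i using Fin.cases with
      | zero =>
        induction j using Fin.cases with
        | zero => simp [hX0, hY0, hωxy]
        | succ j =>
          rw [hX0, hYs]
          simp [hωxw _ (hbW _), (Fin.succ_ne_zero j).symm]
      | succ i =>
        induction j using Fin.cases with
        | zero =>
          rw [hY0, hXs]
          simp [hωwy _ (hbW _), Fin.succ_ne_zero i]
        | succ j =>
          rw [hXs, hYs, ← hωWapply, hb'1]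
          simp [Fin.succ_inj]
    have hXX : ∀ i j, ω (X i) (X j) = 0 := by
      intro i j
      induction i using Fin.cases with
      | zero =>
        induction j using Fin.cases with
        | zero => rw [hX0]; exact hωself x
        | succ j => rw [hX0, hXs]; exact hωxw _ (hbW _)
      | succ i =>
        induction j using Fin.cases with
        | zero => rw [hX0, hXs]; exact hωwx _ (hbW _)
        | succ j => rw [hXs, hXs, ← hωWapply, hb'2]
    have hYY : ∀ i j, ω (Y i) (Y j) = 0 := by
      intro i j
      induction i using Fin.cases with
      | zero =>
        induction j using Fin.cases with
        | zero => rw [hY0]; exact hωself y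
        | succ j => rw [hY0, hYs]; exact hωyw _ (hbW _)
      | succ i =>
        induction j using Fin.cases with
        | zero => rw [hY0, hYs]; exact hωwy _ (hbW _)
        | succ j => rw [hYs, hYs, ← hωWapply, hb'3]
    have hYX : ∀ i j, ω (Y i) (X j) = if i = j then -1 else 0 := by
      intro i j
      rw [hanti, hXY]
      rcases eq_or_ne i j with rfl | h
      · simp
      · simp [h, Ne.symm h]
    -- linear independence
    set v : (Fin (k + 1)) ⊕ (Fin (k + 1)) → V := Sum.elim X Y with hv
    have hsum_eval : ∀ (g : (Fin (k + 1)) ⊕ (Fin (k + 1)) → ℝ) (z : V),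
        ω (∑ i, g i • v i) z = ∑ i, g i * ω (v i) z := fun g z => by
      rw [map_sum, LinearMap.sum_apply]
      congr 1
      ext i
      rw [map_smul, LinearMap.smul_apply, smul_eq_mul]
    have hli2 : LinearIndependent ℝ v := by
      rw [Fintype.linearIndependent_iff]
      intro g hg
      have hkey : ∀ j : Fin (k + 1), g (Sum.inl j) = 0 ∧ g (Sum.inr j) = 0 := by
        intro j
        constructor
        · have h0 : ω (∑ i, g i • v i) (Y j) = ω 0 (Y j) := by rw [hg]
          rw [hsum_eval, map_zero, LinearMap.zero_apply] at h0
          rw [Fintype.sum_sum_type] at h0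
          rw [hv] at h0
          simp only [Sum.elim_inl, Sum.elim_inr, hXY, hYY, mul_ite, mul_one, mul_zero,
            mul_neg, Finset.sum_ite_eq', Finset.mem_univ, if_true,
            Finset.sum_const_zero, add_zero] at h0
          exact h0
        · have h0 : ω (∑ i, g i • v i) (X j) = ω 0 (X j) := by rw [hg]
          rw [hsum_eval, map_zero, LinearMap.zero_apply] at h0
          rw [Fintype.sum_sum_type] at h0
          rw [hv] at h0
          simp only [Sum.elim_inl, Sum.elim_inr, hXX, hYX, mul_ite, mul_one, mul_zero,
            mul_neg, Finset.sum_ite_eq', Finset.mem_univ, if_true,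
            Finset.sum_const_zero, zero_add, neg_eq_zero] at h0
          exact h0
      intro i
      rcases i with i | i
      · exact (hkey i).1
      · exact (hkey i).2
    have hcard : Fintype.card ((Fin (k + 1)) ⊕ (Fin (k + 1))) = finrank ℝ V := by
      simp only [Fintype.card_sum, Fintype.card_fin, hdim]; omega
    let b : Basis ((Fin (k + 1)) ⊕ (Fin (k + 1))) ℝ V :=
      basisOfLinearIndependentOfCardEqFinrank hli2 hcard
    have hbv : ⇑b = v := coe_basisOfLinearIndependentOfCardEqFinrank _ _
    -- the multipliers
    set mu : Fin (k + 1) → ℝ := Fin.cases (1 / r) mu' with hmu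
    have hmu0 : mu 0 = 1 / r := rfl
    have hmus : ∀ j : Fin k, mu j.succ = mu' j := fun j => by simp [hmu]
    refine ⟨b, mu, ?_, ?_, ?_, ?_, ?_⟩
    · intro j
      induction j using Fin.cases with
      | zero => rw [hmu0]; positivity
      | succ j => rw [hmus]; exact hmu'pos j
    · intro i j; rw [hbv, hv]; exact hXY i j
    · intro i j; rw [hbv, hv]; exact hXX i j
    · intro i j; rw [hbv, hv]; exact hYY i j
    · intro s t
      rw [hbv, hv]
      simp only [Sum.elim_inl, Sum.elim_inr]
      rw [Fin.sum_univ_succ]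
      rw [Fin.sum_univ_succ (f := fun j => mu j * (s j ^ 2 + t j ^ 2))]
      set wsum : W := ∑ j : Fin k, (s j.succ • b' (Sum.inl j) + t j.succ • b' (Sum.inr j))
        with hwsum
      have hcoe : ((wsum : V)) = ∑ j : Fin k, (s j.succ • X j.succ + t j.succ • Y j.succ) := by
        rw [hwsum]
        push_cast
        refine Finset.sum_congr rfl fun j _ => ?_
        rw [hXs, hYs]
      have hu0U : s 0 • X 0 + t 0 • Y 0 ∈ U := by
        rw [hX0, hY0]
        exact U.add_mem (U.smul_mem _ hxU) (U.smul_mem _ hyU)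
      rw [← hcoe]
      have huw : ⟪s 0 • X 0 + t 0 • Y 0, (wsum : V)⟫ = 0 :=
        hperpU _ wsum.2 _ hu0U
      rw [hfinner, real_inner_add_add_self, huw]
      have hu0 : ⟪s 0 • X 0 + t 0 • Y 0, s 0 • X 0 + t 0 • Y 0⟫
          = 1 / r * (s 0 ^ 2 + t 0 ^ 2) := by
        rw [hX0, hY0, real_inner_add_add_self]
        simp only [real_inner_smul_left, real_inner_smul_right, hxx, hxy, hyy]
        ring
      have hw : ⟪(wsum : V), (wsum : V)⟫ = ∑ j : Fin k, mu' j * (s j.succ ^ 2 + t j.succ ^ 2) := by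
        rw [← hfinner, ← hfWapply, hwsum]
        exact hb'f (fun j => s j.succ) (fun j => t j.succ)
      rw [hu0, hw, hmu0]
      have : ∀ j : Fin k, mu j.succ * (s j.succ ^ 2 + t j.succ ^ 2)
          = mu' j * (s j.succ ^ 2 + t j.succ ^ 2) := fun j => by rw [hmus]
      rw [Finset.sum_congr rfl fun j _ => this j]
      ring



/-- Williamson's theorem: A positive-definite quadratic form f on
a 2n-dimensional real symplectic vector space admits a symplectic basis
{x_j, y_j} and positive reals μ_j with f(Σ s_j x_j + t_j y_j)
= Σ μ_j (s_j² + t_j²). -/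
theorem stmt4 {V : Type*} [AddCommGroup V] [Module ℝ V] [FiniteDimensional ℝ V]
    (n : ℕ) (hdim : Module.finrank ℝ V = 2 * n)
    (ω : LinearMap.BilinForm ℝ V)
    (hω_anti : ∀ v w : V, ω v w = - ω w v)
    (hω_nondeg : ∀ v : V, (∀ w : V, ω v w = 0) → v = 0)
    (f : QuadraticForm ℝ V) (hf : f.PosDef) :
    ∃ (b : Basis (Fin n ⊕ Fin n) ℝ V) (mu : Fin n → ℝ),
      (∀ j, 0 < mu j) ∧
      (∀ i j, ω (b (Sum.inl i)) (b (Sum.inr j)) = if i = j then 1 else 0) ∧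
      (∀ i j, ω (b (Sum.inl i)) (b (Sum.inl j)) = 0) ∧
      (∀ i j, ω (b (Sum.inr i)) (b (Sum.inr j)) = 0) ∧
      ∀ s t : Fin n → ℝ,
        f (∑ j, (s j • b (Sum.inl j) + t j • b (Sum.inr j)))
          = ∑ j, mu j * ((s j) ^ 2 + (t j) ^ 2) := by
  exact williamson_aux n hdim ω hω_anti hω_nondeg f hf
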